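/- Let θ ≥ 0 and Δ_θ f(z) = θ f'(z) + z f''(z). For every entire f with ‖f‖_a < ∞ for some a > 0, every t > 0 with a t < 1, and b = a/(1 - a t), the series (exp(tΔ_θ)f)(z) = ∑_{k≥0} (t^k/k!) (Δ_θ^k f)(z) converges and ‖exp(tΔ_θ)f‖_b ≤ (1 - a t)^{-θ} ‖f‖_a, where ‖f‖_b = sup_k b^{-k}|f^{(k)}(0)|. -/

import Mathlib

open Finset

noncomputable def rP (r : ℝ) (k : ℕ) : ℝ := ∏ i ∈ Finset.range k, (r + i)

lemma rP_zero (r : ℝ) : rP r 0 = 1 := by simp [rP]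

lemma rP_succ (r : ℝ) (k : ℕ) : rP r (k + 1) = rP r k * (r + k) := Finset.prod_range_succ _ _

lemma rP_nonneg {r : ℝ} (hr : 0 ≤ r) (k : ℕ) : 0 ≤ rP r k :=
  Finset.prod_nonneg fun i _ => by positivity

lemma rP_mono {r s : ℝ} (hr : 0 ≤ r) (hrs : r ≤ s) (k : ℕ) : rP r k ≤ rP s k :=
  Finset.prod_le_prod (fun i _ => by positivity) (fun i _ => by gcongr)

lemma rP_vandermonde (r s : ℝ) (k : ℕ) :
    rP (r + s) k = ∑ ij ∈ Finset.HasAntidiagonal.antidiagonal k,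
      (k.choose ij.1 : ℝ) * (rP r ij.1 * rP s ij.2) := by
  induction k with
  | zero => simp [rP]
  | succ k ih =>
    rw [rP_succ, ih, Finset.sum_mul,
      Finset.sum_antidiagonal_choose_succ_mul (fun i j => rP r i * rP s j) k,
      ← Finset.sum_add_distrib]
    refine Finset.sum_congr rfl fun ij hij => ?_
    have h : ij.1 + ij.2 = k := Finset.HasAntidiagonal.mem_antidiagonal.mp hij
    have hc : (k.choose ij.2 : ℝ) = (k.choose ij.1 : ℝ) := by
      rw [Nat.choose_symm_of_eq_add h.symm]
    have hk : (ij.1 : ℝ) + (ij.2 : ℝ) = (k : ℝ) := by exact_mod_cast congrArg (Nat.cast) h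
    rw [rP_succ, rP_succ, hc]
    rw [← hk]; ring

noncomputable def sTerm (r x : ℝ) (k : ℕ) : ℝ := rP r k / k.factorial * x ^ k

lemma sTerm_nonneg {r x : ℝ} (hr : 0 ≤ r) (hx : 0 ≤ x) (k : ℕ) : 0 ≤ sTerm r x k := by
  have := rP_nonneg hr k
  unfold sTerm; positivity

lemma sTerm_succ (r x : ℝ) (k : ℕ) :
    sTerm r x (k + 1) = sTerm r x k * (x * (r + k) / (k + 1)) := by
  unfold sTerm
  rw [rP_succ, Nat.factorial_succ]
  push_cast
  field_simp
  ring

lemma summable_sTerm {r x : ℝ} (hr : 0 ≤ r) (hx : 0 ≤ x) (hx1 : x < 1) :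
    Summable (sTerm r x) := by
  set q : ℝ := (x + 1) / 2 with hq
  have hxq : x < q := by rw [hq]; linarith
  have hq1 : q < 1 := by rw [hq]; linarith
  have hq0 : 0 < q := by rw [hq]; linarith
  apply summable_of_ratio_norm_eventually_le hq1
  rw [Filter.eventually_atTop]
  refine ⟨⌈(x * r) / (q - x)⌉₊ + 1, fun k hk => ?_⟩
  have hk' : (x * r) / (q - x) ≤ k := le_trans (Nat.le_ceil _) (by exact_mod_cast Nat.le_of_succ_le hk)
  have hratio : x * (r + k) / (k + 1) ≤ q := by
    rw [div_le_iff₀ (by positivity)]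
    have : x * r ≤ k * (q - x) := by
      rw [div_le_iff₀ (by linarith)] at hk'
      linarith
    nlinarith [Nat.cast_nonneg (α := ℝ) k]
  have hrat0 : 0 ≤ x * (r + k) / (k + 1) := by positivity
  have h1 : ‖sTerm r x (k + 1)‖ = ‖sTerm r x k‖ * (x * (r + k) / (k + 1)) := by
    rw [sTerm_succ, Real.norm_eq_abs, Real.norm_eq_abs, abs_mul, abs_of_nonneg hrat0]
  rw [h1, mul_comm q _]
  apply mul_le_mul_of_nonneg_left hratio (abs_nonneg _)

noncomputable def Sb (r x : ℝ) : ℝ := ∑' k : ℕ, sTerm r x k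

lemma Sb_nonneg {r x : ℝ} (hr : 0 ≤ r) (hx : 0 ≤ x) : 0 ≤ Sb r x :=
  tsum_nonneg (sTerm_nonneg hr hx)

lemma Sb_mono {r s x : ℝ} (hr : 0 ≤ r) (hrs : r ≤ s) (hx : 0 ≤ x) (hx1 : x < 1) :
    Sb r x ≤ Sb s x := by
  apply Summable.tsum_le_tsum _ (summable_sTerm hr hx hx1) (summable_sTerm (hr.trans hrs) hx hx1)
  intro k
  unfold sTerm
  have := rP_mono hr hrs k
  have := rP_nonneg hr k
  gcongr

lemma Sb_mul {r s x : ℝ} (hr : 0 ≤ r) (hs : 0 ≤ s) (hx : 0 ≤ x) (hx1 : x < 1) :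
    Sb r x * Sb s x = Sb (r + s) x := by
  have hsr := summable_sTerm hr hx hx1
  have hss := summable_sTerm hs hx hx1
  have h1 : Summable fun k => ‖sTerm r x k‖ := by
    simpa only [Real.norm_eq_abs, abs_of_nonneg (sTerm_nonneg hr hx _)] using hsr
  have h2 : Summable fun k => ‖sTerm s x k‖ := by
    simpa only [Real.norm_eq_abs, abs_of_nonneg (sTerm_nonneg hs hx _)] using hss
  rw [Sb, Sb, Sb, tsum_mul_tsum_eq_tsum_sum_antidiagonal_of_summable_norm h1 h2]
  congr 1
  funext k
  show _ = rP (r + s) k / _ * _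
  rw [rP_vandermonde, Finset.sum_div, Finset.sum_mul]
  refine Finset.sum_congr rfl fun ij hij => ?_
  have h : ij.1 + ij.2 = k := Finset.HasAntidiagonal.mem_antidiagonal.mp hij
  have hle : ij.1 ≤ k := h ▸ Nat.le_add_right _ _
  have hfac : (k.choose ij.1 : ℝ) = (k.factorial : ℝ) / (ij.1.factorial * ij.2.factorial) := by
    rw [eq_div_iff (by positivity), ← h, ← mul_assoc]
    have := Nat.choose_mul_factorial_mul_factorial (Nat.le_add_right ij.1 ij.2)
    rw [Nat.add_sub_cancel_left] at this
    exact_mod_cast congrArg (Nat.cast (R := ℝ)) this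
  unfold sTerm
  rw [hfac, ← h, pow_add]
  have f1 : (ij.1.factorial : ℝ) ≠ 0 := by positivity
  have f2 : (ij.2.factorial : ℝ) ≠ 0 := by positivity
  have f3 : (k.factorial : ℝ) ≠ 0 := by positivity
  field_simp

lemma Sb_zero {x : ℝ} : Sb 0 x = 1 := by
  rw [Sb, tsum_eq_single 0]
  · simp [sTerm, rP_zero]
  · intro k hk
    obtain ⟨m, rfl⟩ := Nat.exists_eq_succ_of_ne_zero hk
    have : rP 0 (m + 1) = 0 := by
      apply Finset.prod_eq_zero (Finset.mem_range.mpr (Nat.succ_pos m))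
      simp
    simp [sTerm, this]

lemma Sb_one {x : ℝ} (hx : 0 ≤ x) (hx1 : x < 1) : Sb 1 x = (1 - x)⁻¹ := by
  have hP : ∀ k, rP 1 k = (k.factorial : ℝ) := by
    intro k
    rw [rP, ← Finset.prod_range_add_one_eq_factorial, Nat.cast_prod]
    push_cast
    exact Finset.prod_congr rfl fun i _ => by ring
  have : ∀ k, sTerm 1 x k = x ^ k := by
    intro k
    rw [sTerm, hP, div_self (by positivity), one_mul]
  rw [Sb]
  simp_rw [this]
  exact tsum_geometric_of_lt_one hx hx1

lemma Sb_nat {x : ℝ} (hx : 0 ≤ x) (hx1 : x < 1) (n : ℕ) : Sb (n : ℝ) x = (1 - x)⁻¹ ^ n := by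
  induction n with
  | zero => simpa using Sb_zero
  | succ n ih =>
    have := Sb_mul (r := (n : ℝ)) (s := 1) (by positivity) zero_le_one hx hx1
    rw [ih, Sb_one hx hx1] at this
    rw [pow_succ, this]
    push_cast
    ring_nf

lemma Sb_pow {r x : ℝ} (hr : 0 ≤ r) (hx : 0 ≤ x) (hx1 : x < 1) (m : ℕ) :
    Sb r x ^ m = Sb (m * r) x := by
  induction m with
  | zero => simpa using Sb_zero.symm
  | succ m ih =>
    rw [pow_succ, ih, Sb_mul (by positivity) hr hx hx1]
    push_cast
    ring_nf

lemma Sb_rat {x : ℝ} (hx : 0 ≤ x) (hx1 : x < 1) (p m : ℕ) (hm : 0 < m) :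
    Sb ((p : ℝ) / m) x = (1 - x)⁻¹ ^ ((p : ℝ) / m) := by
  have hm' : (m : ℝ) ≠ 0 := by positivity
  have hq : (0 : ℝ) ≤ (p : ℝ) / m := by positivity
  have h1x : (0 : ℝ) < (1 - x)⁻¹ := by
    have : (0:ℝ) < 1 - x := by linarith
    positivity
  have hpow : Sb ((p : ℝ) / m) x ^ m = (1 - x)⁻¹ ^ p := by
    rw [Sb_pow hq hx hx1, mul_div_cancel₀ _ hm', Sb_nat hx hx1]
  have hpow2 : ((1 - x)⁻¹ ^ ((p : ℝ) / m)) ^ m = (1 - x)⁻¹ ^ p := by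
    rw [← Real.rpow_natCast ((1 - x)⁻¹ ^ ((p : ℝ) / m)) m, ← Real.rpow_mul h1x.le,
      div_mul_cancel₀ _ hm', Real.rpow_natCast]
  have h := hpow.trans hpow2.symm
  have hS0 : 0 ≤ Sb ((p : ℝ) / m) x := Sb_nonneg hq hx
  have hR0 : 0 ≤ (1 - x)⁻¹ ^ ((p : ℝ) / m) := (Real.rpow_pos_of_pos h1x _).le
  exact (pow_left_inj₀ hS0 hR0 hm.ne').mp h

lemma Sb_le {r x : ℝ} (hr : 0 ≤ r) (hx : 0 ≤ x) (hx1 : x < 1) :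
    Sb r x ≤ (1 - x)⁻¹ ^ r := by
  have h1x : (0 : ℝ) < (1 - x)⁻¹ := by
    have : (0:ℝ) < 1 - x := by linarith
    positivity
  set q : ℕ → ℝ := fun n => (⌈r * (n + 1)⌉₊ : ℝ) / (n + 1) with hqdef
  have hrq : ∀ n : ℕ, r ≤ q n := by
    intro n
    rw [hqdef, le_div_iff₀ (by positivity)]
    exact Nat.le_ceil _
  have hqr : ∀ n : ℕ, q n ≤ r + 1 / (n + 1) := by
    intro n
    rw [hqdef]
    rw [div_le_iff₀ (by positivity)]
    have := Nat.ceil_lt_add_one (a := r * (n + 1)) (by positivity)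
    calc (⌈r * (n + 1)⌉₊ : ℝ) ≤ r * (n + 1) + 1 := this.le
      _ = (r + 1 / (n + 1)) * (n + 1) := by field_simp
  have htend : Filter.Tendsto (fun n : ℕ => (1 - x)⁻¹ ^ (q n)) Filter.atTop
      (nhds ((1 - x)⁻¹ ^ r)) := by
    have hq_tend : Filter.Tendsto q Filter.atTop (nhds r) := by
      have h0 : Filter.Tendsto (fun n : ℕ => r + 1 / ((n : ℝ) + 1)) Filter.atTop (nhds (r + 0)) :=
        Filter.Tendsto.const_add r tendsto_one_div_add_atTop_nhds_zero_nat
      rw [add_zero] at h0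
      exact tendsto_of_tendsto_of_tendsto_of_le_of_le tendsto_const_nhds h0 hrq hqr
    exact ((Real.continuousAt_const_rpow (by positivity : (1-x)⁻¹ ≠ 0)).tendsto).comp hq_tend
  refine ge_of_tendsto htend (Filter.Eventually.of_forall fun n => ?_)
  have : Sb r x ≤ Sb (q n) x := Sb_mono hr (hrq n) hx hx1
  calc Sb r x ≤ Sb (q n) x := this
    _ = (1 - x)⁻¹ ^ (q n) := by
        rw [hqdef]
        have h := Sb_rat hx hx1 (⌈r * ((n : ℝ) + 1)⌉₊) (n + 1) (Nat.succ_pos n)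
        push_cast at h
        exact h

/-- The operator Δ_θ f = θ f' + z f''. -/
noncomputable def Dop (θ : ℝ) (f : ℂ → ℂ) : ℂ → ℂ :=
  fun z => (θ : ℂ) * deriv f z + z * deriv (deriv f) z

/-- The exponential-type norm ‖f‖_b = sup_{k} b^{-k} |f^{(k)}(0)|. -/
noncomputable def entNorm (b : ℝ) (f : ℂ → ℂ) : ℝ :=
  ⨆ k : ℕ, b⁻¹ ^ k * ‖iteratedDeriv k f 0‖

lemma entire_deriv {f : ℂ → ℂ} (hf : Differentiable ℂ f) : Differentiable ℂ (deriv f) := by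
  have h := (hf.contDiff (n := 2)).differentiable_iteratedDeriv 1 (by norm_num)
  rwa [iteratedDeriv_one] at h

lemma entire_Dop {θ : ℝ} {f : ℂ → ℂ} (hf : Differentiable ℂ f) :
    Differentiable ℂ (Dop θ f) := by
  have h1 := entire_deriv hf
  have h2 := entire_deriv h1
  exact ((h1.const_mul _).add (differentiable_fun_id.mul h2))

/-- iterated derivative of z * h z -/
lemma iteratedDeriv_id_mul {h : ℂ → ℂ} (hh : Differentiable ℂ h) (n : ℕ) (z : ℂ) :
    iteratedDeriv (n + 1) (fun w => w * h w) z =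
      (n + 1 : ℂ) * iteratedDeriv n h z + z * iteratedDeriv (n + 1) h z := by
  induction n generalizing h z with
  | zero =>
    rw [iteratedDeriv_one, iteratedDeriv_zero, iteratedDeriv_one]
    rw [deriv_fun_mul differentiableAt_fun_id (hh.differentiableAt)]
    simp
  | succ n ih =>
    have hd : deriv (fun w => w * h w) = fun w => h w + w * deriv h w := by
      funext w
      rw [deriv_fun_mul differentiableAt_fun_id (hh.differentiableAt)]
      simp
    rw [iteratedDeriv_succ', hd]
    have hh' := entire_deriv hh
    have hadd : iteratedDeriv (n + 1) (fun w => h w + w * deriv h w) z =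
        iteratedDeriv (n + 1) h z + iteratedDeriv (n + 1) (fun w => w * deriv h w) z := by
      have e1 : ContDiff ℂ (n + 1) h := hh.contDiff
      have e2 : ContDiff ℂ (n + 1) (fun w => w * deriv h w) :=
        (contDiff_id.mul (hh'.contDiff))
      rw [iteratedDeriv_eq_iteratedFDeriv, iteratedDeriv_eq_iteratedFDeriv,
        iteratedDeriv_eq_iteratedFDeriv]
      have := fun_iteratedFDeriv_add_apply (i := n + 1) (f := h)
        (g := fun w => w * deriv h w) e1.contDiffAt e2.contDiffAt (x := z)
      exact (congrFun (congrArg _ this) _).trans (ContinuousMultilinearMap.add_apply _ _ _)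
    rw [hadd, ih hh' z, ← iteratedDeriv_succ', ← iteratedDeriv_succ']
    push_cast
    ring

lemma iteratedDeriv_Dop {θ : ℝ} {g : ℂ → ℂ} (hg : Differentiable ℂ g) (n : ℕ) :
    iteratedDeriv n (Dop θ g) 0 = ((θ : ℂ) + n) * iteratedDeriv (n + 1) g 0 := by
  have h1 := entire_deriv hg
  have h2 := entire_deriv h1
  have hsplit : iteratedDeriv n (Dop θ g) 0 =
      (θ : ℂ) * iteratedDeriv n (deriv g) 0 +
        iteratedDeriv n (fun z => z * deriv (deriv g) z) 0 := by
    have e1 : ContDiff ℂ n (fun z => (θ : ℂ) * deriv g z) := (h1.const_mul _).contDiff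
    have e2 : ContDiff ℂ n (fun z => z * deriv (deriv g) z) :=
      (differentiable_fun_id.mul h2).contDiff
    have hadd : iteratedDeriv n (Dop θ g) 0 =
        iteratedDeriv n (fun z => (θ : ℂ) * deriv g z) 0 +
          iteratedDeriv n (fun z => z * deriv (deriv g) z) 0 := by
      rw [iteratedDeriv_eq_iteratedFDeriv, iteratedDeriv_eq_iteratedFDeriv,
        iteratedDeriv_eq_iteratedFDeriv]
      have := fun_iteratedFDeriv_add_apply (i := n) e1.contDiffAt e2.contDiffAt (x := 0)
      exact (congrFun (congrArg _ this) _).trans (ContinuousMultilinearMap.add_apply _ _ _)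
    rw [hadd]
    congr 1
    have hsmul : (fun z => (θ : ℂ) * deriv g z) = fun z => (θ : ℂ) • deriv g z := by
      funext z; simp [smul_eq_mul]
    rw [hsmul, iteratedDeriv_eq_iteratedFDeriv, iteratedDeriv_eq_iteratedFDeriv]
    have := iteratedFDeriv_const_smul_apply' (i := n) (f := deriv g) (x := (0:ℂ))
      (a := (θ : ℂ)) h1.contDiff.contDiffAt
    have h' := congrArg
      (fun m : ContinuousMultilinearMap ℂ (fun _ : Fin n => ℂ) ℂ => m fun _ => (1:ℂ)) this
    simpa [smul_eq_mul] using h'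
  rw [hsplit]
  cases n with
  | zero =>
    simp [iteratedDeriv_zero, iteratedDeriv_one]
  | succ n =>
    rw [iteratedDeriv_id_mul h2 n 0, ← iteratedDeriv_succ', ← iteratedDeriv_succ',
      ← iteratedDeriv_succ']
    push_cast
    ring

lemma entire_DopIter {θ : ℝ} {f : ℂ → ℂ} (hf : Differentiable ℂ f) (k : ℕ) :
    Differentiable ℂ ((Dop θ)^[k] f) := by
  induction k with
  | zero => simpa using hf
  | succ k ih =>
    rw [Function.iterate_succ_apply']
    exact entire_Dop ih

lemma iteratedDeriv_DopIter {θ : ℝ} {f : ℂ → ℂ} (hf : Differentiable ℂ f) (k : ℕ) (n : ℕ) :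
    iteratedDeriv n ((Dop θ)^[k] f) 0 =
      (∏ i ∈ Finset.range k, ((θ : ℂ) + n + i)) * iteratedDeriv (n + k) f 0 := by
  induction k generalizing n with
  | zero => simp
  | succ k ih =>
    rw [Function.iterate_succ_apply', iteratedDeriv_Dop (entire_DopIter hf k) n, ih (n + 1),
      Finset.prod_range_succ']
    push_cast
    rw [show n + 1 + k = n + (k + 1) by ring]
    have : ∀ i : ℕ, (θ : ℂ) + (n + 1) + i = (θ : ℂ) + n + (i + 1) := by
      intro i; push_cast; ring
    simp_rw [this]
    ring

/-- For entire f with ‖f‖_a < ∞, t > 0 with a t < 1 and b = a/(1-at), the series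
exp(tΔ_θ)f = ∑ (t^k/k!) Δ_θ^k f converges pointwise and
‖exp(tΔ_θ)f‖_b ≤ (1-at)^{-θ} ‖f‖_a. -/
theorem stmt7 (θ a t : ℝ) (hθ : 0 ≤ θ) (ha : 0 < a) (ht : 0 < t) (hat : a * t < 1)
    (f : ℂ → ℂ) (hf : Differentiable ℂ f)
    (hfa : BddAbove (Set.range fun k : ℕ => a⁻¹ ^ k * ‖iteratedDeriv k f 0‖)) :
    (∀ z : ℂ, Summable (fun k : ℕ => ((t ^ k / k.factorial : ℝ) : ℂ) * (Dop θ)^[k] f z)) ∧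
    BddAbove (Set.range fun k : ℕ => (a / (1 - a * t))⁻¹ ^ k *
      ‖iteratedDeriv k
        (fun z => ∑' m : ℕ, ((t ^ m / m.factorial : ℝ) : ℂ) * (Dop θ)^[m] f z) 0‖) ∧
    entNorm (a / (1 - a * t))
        (fun z => ∑' m : ℕ, ((t ^ m / m.factorial : ℝ) : ℂ) * (Dop θ)^[m] f z)
      ≤ (1 - a * t) ^ (-θ) * entNorm a f := by
  have hx0 : 0 < a * t := mul_pos ha ht
  have h1x : 0 < 1 - a * t := by linarith
  set x := a * t with hxdef
  set b := a / (1 - x) with hbdef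
  have hb0 : 0 < b := div_pos ha h1x
  set C : ℝ := (1 - x)⁻¹ ^ θ with hCdef
  have hC0 : 0 < C := Real.rpow_pos_of_pos (by positivity) _
  set M := entNorm a f with hMdef
  have hMrfl : entNorm a f = ⨆ k : ℕ, a⁻¹ ^ k * ‖iteratedDeriv k f 0‖ := rfl
  have hMle : ∀ n : ℕ, ‖iteratedDeriv n f 0‖ ≤ M * a ^ n := by
    intro n
    have h : a⁻¹ ^ n * ‖iteratedDeriv n f 0‖ ≤ M := by
      rw [hMdef, hMrfl]; exact le_ciSup hfa n
    calc ‖iteratedDeriv n f 0‖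
        = a ^ n * (a⁻¹ ^ n * ‖iteratedDeriv n f 0‖) := by
          rw [← mul_assoc, ← mul_pow, mul_inv_cancel₀ ha.ne', one_pow, one_mul]
      _ ≤ a ^ n * M := by gcongr
      _ = M * a ^ n := mul_comm _ _
  have hM0 : 0 ≤ M := by
    have h : a⁻¹ ^ 0 * ‖iteratedDeriv 0 f 0‖ ≤ M := by
      rw [hMdef, hMrfl]; exact le_ciSup hfa 0
    have : (0:ℝ) ≤ a⁻¹ ^ 0 * ‖iteratedDeriv 0 f 0‖ := by positivity
    linarith
  have hθn : ∀ n : ℕ, (0:ℝ) ≤ θ + n := fun n => by positivity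
  have hg : ∀ k, Differentiable ℂ ((Dop θ)^[k] f) := entire_DopIter hf
  -- bound on iterated derivatives of the iterates
  have hDb : ∀ n k : ℕ, ‖iteratedDeriv n ((Dop θ)^[k] f) 0‖
      ≤ M * a ^ (n + k) * rP (θ + n) k := by
    intro n k
    rw [iteratedDeriv_DopIter hf k n, norm_mul]
    have hprod : ‖∏ i ∈ Finset.range k, ((θ:ℂ) + n + i)‖ = rP (θ + n) k := by
      rw [norm_prod, rP]
      refine Finset.prod_congr rfl fun i _ => ?_
      have h2 : ((θ:ℂ) + n + i) = ((θ + n + i : ℝ) : ℂ) := by push_cast; ring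
      rw [h2, Complex.norm_real, Real.norm_eq_abs, abs_of_nonneg (by positivity)]
    rw [hprod]
    have h3 := rP_nonneg (hθn n) k
    calc rP (θ+n) k * ‖iteratedDeriv (n+k) f 0‖
        ≤ rP (θ+n) k * (M * a ^ (n+k)) := by gcongr; exact hMle (n+k)
      _ = M * a ^ (n+k) * rP (θ+n) k := by ring
  -- term bound
  have hterm : ∀ n k : ℕ,
      ‖((t ^ k / k.factorial : ℝ) : ℂ) * iteratedDeriv n ((Dop θ)^[k] f) 0‖
      ≤ M * a ^ n * sTerm (θ + n) x k := by
    intro n k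
    rw [norm_mul, Complex.norm_real, Real.norm_eq_abs, abs_of_nonneg (by positivity)]
    calc t ^ k / k.factorial * ‖iteratedDeriv n ((Dop θ)^[k] f) 0‖
        ≤ t ^ k / k.factorial * (M * a ^ (n + k) * rP (θ + n) k) := by
          gcongr; exact hDb n k
      _ = M * a ^ n * sTerm (θ + n) x k := by
          rw [sTerm, hxdef, pow_add, mul_pow]; field_simp
  have hsum_k : ∀ n : ℕ, Summable (fun k => M * a ^ n * sTerm (θ + n) x k) :=
    fun n => (summable_sTerm (hθn n) hx0.le hat).mul_left _
  have hbn : ∀ n : ℕ, M * a ^ n * ((1 - x)⁻¹ ^ (θ + (n:ℝ))) = M * C * b ^ n := by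
    intro n
    rw [Real.rpow_add (by positivity), Real.rpow_natCast, hbdef, div_eq_mul_inv, mul_pow, hCdef]
    ring
  have htsum_k : ∀ n : ℕ, (∑' k, M * a ^ n * sTerm (θ + n) x k) ≤ M * C * b ^ n := by
    intro n
    rw [tsum_mul_left, ← hbn n]
    have hSb := Sb_le (hθn n) hx0.le hat
    have : (0:ℝ) ≤ M * a ^ n := by positivity
    calc M * a ^ n * Sb (θ + n) x ≤ M * a ^ n * ((1 - x)⁻¹ ^ ((θ + n:ℝ))) := by
          apply mul_le_mul_of_nonneg_left _ this
          exact_mod_cast hSb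
      _ = _ := rfl

  -- the coefficient sums
  set Cc : ℕ → ℂ := fun n =>
    ∑' k : ℕ, ((t ^ k / k.factorial : ℝ) : ℂ) * iteratedDeriv n ((Dop θ)^[k] f) 0 with hCcdef
  have htermn : ∀ n k : ℕ,
      ‖((t ^ k / k.factorial : ℝ) : ℂ) * iteratedDeriv n ((Dop θ)^[k] f) 0‖
      ≤ M * a ^ n * sTerm (θ + n) x k := by
    intro n k
    exact hterm n k
  have hsumCc : ∀ n, Summable (fun k =>
      ((t ^ k / k.factorial : ℝ) : ℂ) * iteratedDeriv n ((Dop θ)^[k] f) 0) := by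
    intro n
    exact Summable.of_norm_bounded (hsum_k n) (htermn n)
  have hCcb : ∀ n, ‖Cc n‖ ≤ M * C * b ^ n := by
    intro n
    have hnorms : Summable (fun k =>
        ‖((t ^ k / k.factorial : ℝ) : ℂ) * iteratedDeriv n ((Dop θ)^[k] f) 0‖) :=
      Summable.of_nonneg_of_le (fun k => norm_nonneg _) (htermn n) (hsum_k n)
    calc ‖Cc n‖
        ≤ ∑' k, ‖((t ^ k / k.factorial : ℝ) : ℂ) * iteratedDeriv n ((Dop θ)^[k] f) 0‖ := by
          rw [hCcdef]
          exact norm_tsum_le_tsum_norm hnorms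
      _ ≤ ∑' k, M * a ^ n * sTerm (θ + n) x k := Summable.tsum_le_tsum (htermn n) hnorms (hsum_k n)
      _ ≤ M * C * b ^ n := htsum_k n

  -- per-z analysis
  have hzkey : ∀ z : ℂ,
      Summable (fun k : ℕ => ((t ^ k / k.factorial : ℝ) : ℂ) * (Dop θ)^[k] f z) ∧
      HasSum (fun n => ((n.factorial : ℂ)⁻¹ * Cc n) * z ^ n)
        (∑' m : ℕ, ((t ^ m / m.factorial : ℝ) : ℂ) * (Dop θ)^[m] f z) := by
    intro z
    set R := ‖z‖ with hRdef
    have hR0 : 0 ≤ R := norm_nonneg z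
    set Φ : ℕ × ℕ → ℝ := fun p =>
      R ^ p.1 / p.1.factorial * (M * a ^ p.1 * sTerm (θ + p.1) x p.2) with hΦdef
    have hΦnn : ∀ p : ℕ × ℕ, 0 ≤ Φ p := by
      intro p
      simp only [hΦdef]
      exact mul_nonneg (by positivity)
        (mul_nonneg (mul_nonneg hM0 (pow_nonneg ha.le _)) (sTerm_nonneg (hθn p.1) hx0.le p.2))
    have hΦrow : ∀ n : ℕ, Summable fun k => Φ (n, k) := by
      intro n
      simp only [hΦdef]
      exact ((summable_sTerm (hθn n) hx0.le hat).mul_left (M * a ^ n)).mul_left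
        (R ^ n / n.factorial)
    have hΦtsum : ∀ n : ℕ, (∑' k, Φ (n, k)) ≤ M * C * ((b * R) ^ n / n.factorial) := by
      intro n
      simp only [hΦdef]
      rw [tsum_mul_left]
      calc R ^ n / n.factorial * (∑' k, M * a ^ n * sTerm (θ + n) x k)
          ≤ R ^ n / n.factorial * (M * C * b ^ n) := by
            have : (0:ℝ) ≤ R ^ n / n.factorial := by positivity
            exact mul_le_mul_of_nonneg_left (htsum_k n) this
        _ = M * C * ((b * R) ^ n / n.factorial) := by rw [mul_pow]; ring
    have hΦsum : Summable Φ := by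
      rw [summable_prod_of_nonneg hΦnn]
      refine ⟨hΦrow, ?_⟩
      refine Summable.of_nonneg_of_le (fun n => tsum_nonneg fun k => hΦnn (n, k))
        (fun n => hΦtsum n) ?_
      exact ((Real.summable_pow_div_factorial (b * R)).mul_left (M * C))
    -- the double family
    set Ψ : ℕ × ℕ → ℂ := fun p =>
      ((p.1.factorial : ℂ)⁻¹ * z ^ p.1) *
        (((t ^ p.2 / p.2.factorial : ℝ) : ℂ) * iteratedDeriv p.1 ((Dop θ)^[p.2] f) 0) with hΨdef
    have hΨle : ∀ p : ℕ × ℕ, ‖Ψ p‖ ≤ Φ p := by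
      intro p
      simp only [hΨdef]
      rw [norm_mul, norm_mul, norm_inv, norm_pow, Complex.norm_natCast]
      calc ((p.1.factorial : ℝ))⁻¹ * ‖z‖ ^ p.1 *
            ‖((t ^ p.2 / p.2.factorial : ℝ) : ℂ) * iteratedDeriv p.1 ((Dop θ)^[p.2] f) 0‖
          ≤ ((p.1.factorial : ℝ))⁻¹ * R ^ p.1 * (M * a ^ p.1 * sTerm (θ + p.1) x p.2) := by
            have h0 : (0:ℝ) ≤ ((p.1.factorial : ℝ))⁻¹ * R ^ p.1 := by positivity
            have : ‖z‖ = R := rfl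
            rw [this]
            exact mul_le_mul_of_nonneg_left (htermn p.1 p.2) h0
        _ = Φ p := by simp only [hΦdef]; ring
    have hΨsum : Summable Ψ := Summable.of_norm_bounded hΦsum hΨle
    have hΨnorms : ∀ k : ℕ, Summable fun n => Φ (n, k) := fun k =>
      ((summable_prod_of_nonneg (fun p => hΦnn p.swap)).mp hΦsum.prod_symm).1 k
    have hΨcol : Summable fun k : ℕ => ∑' n, Φ (n, k) :=
      ((summable_prod_of_nonneg (fun p => hΦnn p.swap)).mp hΦsum.prod_symm).2
    -- Taylor expansion of the iterates
    have hgz : ∀ k : ℕ, HasSum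
        (fun n => ((n.factorial : ℂ)⁻¹ * z ^ n) * iteratedDeriv n ((Dop θ)^[k] f) 0)
        ((Dop θ)^[k] f z) := by
      intro k
      have h := Complex.hasSum_taylorSeries_of_entire (hg k) 0 z
      simpa [smul_eq_mul, sub_zero, mul_assoc] using h
    have hΨrow : ∀ k : ℕ, HasSum (fun n => Ψ (n, k))
        (((t ^ k / k.factorial : ℝ) : ℂ) * (Dop θ)^[k] f z) := by
      intro k
      have h := (hgz k).mul_left ((t ^ k / k.factorial : ℝ) : ℂ)
      have he : (fun n => ((t ^ k / k.factorial : ℝ) : ℂ) *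
          (((n.factorial : ℂ)⁻¹ * z ^ n) * iteratedDeriv n ((Dop θ)^[k] f) 0)) =
          fun n => Ψ (n, k) := by
        funext n
        simp only [hΨdef]
        ring
      rwa [he] at h
    have hsum1 : Summable (fun k : ℕ => ((t ^ k / k.factorial : ℝ) : ℂ) * (Dop θ)^[k] f z) := by
      refine Summable.of_norm_bounded hΨcol (fun k => ?_)
      have hnormsum : Summable fun n => ‖Ψ (n, k)‖ :=
        Summable.of_nonneg_of_le (fun n => norm_nonneg _) (fun n => hΨle (n, k)) (hΨnorms k)
      calc ‖((t ^ k / k.factorial : ℝ) : ℂ) * (Dop θ)^[k] f z‖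
          = ‖∑' n, Ψ (n, k)‖ := by rw [(hΨrow k).tsum_eq]
        _ ≤ ∑' n, ‖Ψ (n, k)‖ := norm_tsum_le_tsum_norm hnormsum
        _ ≤ ∑' n, Φ (n, k) := Summable.tsum_le_tsum (fun n => hΨle (n, k)) hnormsum (hΨnorms k)
    refine ⟨hsum1, ?_⟩
    -- Fubini
    have hfub : (∑' m : ℕ, ((t ^ m / m.factorial : ℝ) : ℂ) * (Dop θ)^[m] f z)
        = ∑' n : ℕ, ((n.factorial : ℂ)⁻¹ * z ^ n) * Cc n := by
      calc (∑' m : ℕ, ((t ^ m / m.factorial : ℝ) : ℂ) * (Dop θ)^[m] f z)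
          = ∑' (k : ℕ) (n : ℕ), Ψ (n, k) := by
            congr 1
            funext k
            exact (hΨrow k).tsum_eq.symm
        _ = ∑' (n : ℕ) (k : ℕ), Ψ (n, k) := by
            exact Summable.tsum_comm (by exact hΨsum)
        _ = ∑' n : ℕ, ((n.factorial : ℂ)⁻¹ * z ^ n) * Cc n := by
            congr 1
            funext n
            simp only [hCcdef, hΨdef]
            exact tsum_mul_left
    have hCs : Summable (fun n : ℕ => ((n.factorial : ℂ)⁻¹ * z ^ n) * Cc n) := by
      refine Summable.of_norm_bounded
        (((Real.summable_pow_div_factorial (b * R)).mul_left (M * C))) (fun n => ?_)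
      rw [norm_mul, norm_mul, norm_inv, norm_pow, Complex.norm_natCast]
      calc ((n.factorial : ℝ))⁻¹ * ‖z‖ ^ n * ‖Cc n‖
          ≤ ((n.factorial : ℝ))⁻¹ * R ^ n * (M * C * b ^ n) := by
            have h0 : (0:ℝ) ≤ ((n.factorial : ℝ))⁻¹ * R ^ n := by positivity
            have hzR : ‖z‖ = R := rfl
            rw [hzR]
            refine mul_le_mul_of_nonneg_left ?_ h0
            exact hCcb n
        _ = M * C * ((b * R) ^ n / n.factorial) := by rw [mul_pow]; ring
    have h := hCs.hasSum
    rw [← hfub] at h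
    have he : (fun n : ℕ => ((n.factorial : ℂ)⁻¹ * z ^ n) * Cc n)
        = fun n => ((n.factorial : ℂ)⁻¹ * Cc n) * z ^ n := by
      funext n; ring
    rwa [he] at h

  -- the power series of the sum function
  set F : ℂ → ℂ := fun z => ∑' m : ℕ, ((t ^ m / m.factorial : ℝ) : ℂ) * (Dop θ)^[m] f z with hFdef
  set cs : ℕ → ℂ := fun n => (n.factorial : ℂ)⁻¹ * Cc n with hcsdef
  have hcsb : ∀ (n : ℕ) (r : ℝ), 0 ≤ r → ‖cs n‖ * r ^ n ≤ M * C * ((b * r) ^ n / n.factorial) := by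
    intro n r hr
    simp only [hcsdef]
    rw [norm_mul, norm_inv, Complex.norm_natCast]
    calc (n.factorial : ℝ)⁻¹ * ‖Cc n‖ * r ^ n
        ≤ (n.factorial : ℝ)⁻¹ * (M * C * b ^ n) * r ^ n := by
          have h0 : (0:ℝ) ≤ (n.factorial : ℝ)⁻¹ := by positivity
          have h1 : ‖Cc n‖ ≤ M * C * b ^ n := by
            exact hCcb n
          have h2 : (0:ℝ) ≤ r ^ n := by positivity
          exact mul_le_mul_of_nonneg_right (mul_le_mul_of_nonneg_left h1 h0) h2
      _ = M * C * ((b * r) ^ n / n.factorial) := by rw [mul_pow]; ring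
  set p : FormalMultilinearSeries ℂ ℂ ℂ := FormalMultilinearSeries.ofScalars ℂ cs with hpdef
  have hpr : p.radius = ⊤ := by
    apply p.radius_eq_top_of_summable_norm
    intro r
    refine Summable.of_nonneg_of_le (fun n => by positivity) (fun n => ?_)
      ((Real.summable_pow_div_factorial (b * r)).mul_left (M * C))
    rw [hpdef, FormalMultilinearSeries.ofScalars_norm]
    exact hcsb n r r.coe_nonneg
  have hFP : HasFPowerSeriesOnBall F p 0 ⊤ := by
    refine ⟨le_of_eq hpr.symm, by simp, fun {y} _ => ?_⟩
    have h := (hzkey y).2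
    rw [zero_add]
    have he : (fun n => p n fun _ => y) = fun n => ((n.factorial : ℂ)⁻¹ * Cc n) * y ^ n := by
      funext n
      rw [hpdef, FormalMultilinearSeries.ofScalars_apply_eq, smul_eq_mul, hcsdef]
    rw [he]
    exact h
  have hiter : ∀ n : ℕ, iteratedDeriv n F 0 = Cc n := by
    intro n
    have h := hFP.factorial_smul (y := (1 : ℂ)) n
    rw [hpdef, FormalMultilinearSeries.ofScalars_apply_eq, one_pow, smul_eq_mul, mul_one,
      nsmul_eq_mul, hcsdef] at h
    rw [iteratedDeriv_eq_iteratedFDeriv, ← h, ← mul_assoc,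
      mul_inv_cancel₀ (Nat.cast_ne_zero.mpr n.factorial_ne_zero), one_mul]
  have habs : ∀ n : ℕ, ‖iteratedDeriv n F 0‖ ≤ M * C * b ^ n := by
    intro n
    rw [hiter n]
    exact hCcb n
  have hcancel : ∀ n : ℕ, b⁻¹ ^ n * (M * C * b ^ n) = M * C := by
    intro n
    rw [mul_comm (M * C) (b ^ n), ← mul_assoc, ← mul_pow, inv_mul_cancel₀ hb0.ne', one_pow, one_mul]
  have hbound : ∀ n : ℕ, b⁻¹ ^ n * ‖iteratedDeriv n F 0‖ ≤ M * C := by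
    intro n
    rw [← hcancel n]
    have h0 : (0:ℝ) ≤ b⁻¹ ^ n := by positivity
    exact mul_le_mul_of_nonneg_left (habs n) h0
  refine ⟨fun z => (hzkey z).1, ⟨M * C, ?_⟩, ?_⟩
  · rintro y ⟨n, rfl⟩
    exact hbound n
  · have hCrpow : (1 - x) ^ (-θ) = C := by
      rw [hCdef, Real.rpow_neg h1x.le, ← Real.inv_rpow h1x.le]
    rw [hCrpow, mul_comm ((1 - x)⁻¹ ^ θ) M]
    exact ciSup_le hbound
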